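/- Let H be a reduced double-well type potential, β > 0, and let Φ_β, λ_β, ν_β be as above. Then: (1) F_β^0(λ_β) · F_β^1(λ_β) = 1 (the characteristic equation); (2) Φ_β|[01] = F_β^1(λ_β) Φ_β|[10] and Φ_β|[10] = F_β^0(λ_β) Φ_β|[01]; (3) ν_β([01]) = F_β^0(λ_β) ν_β([10]) and ν_β([10]) = F_β^1(λ_β) ν_β([01]). -/

import Mathlib

open MeasureTheory Filter Topology

/-- The one-sided full shift space on two symbols. -/
abbrev Sig : Type := ℕ → Fin 2

/-- The left shift map. -/
def shft : Sig → Sig := fun x n => x (n + 1)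

/-- Concatenation of a symbol with a configuration. -/
def cons2 (i : Fin 2) (x : Sig) : Sig := fun n => match n with
  | 0 => i
  | Nat.succ k => x k

/-- `x` and `y` agree on their first `n` coordinates. -/
def nClose (n : ℕ) (x y : Sig) : Prop := ∀ k, k < n → x k = y k

/-- The `n`-th variation of `H`. -/
noncomputable def Var (H : Sig → ℝ) (n : ℕ) : ℝ :=
  sSup {d : ℝ | ∃ x y : Sig, nClose n x y ∧ d = |H x - H y|}

/-- `H` has summable variation. -/
def SummableVar (H : Sig → ℝ) : Prop := Summable (fun n : ℕ => Var H (n + 1))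

/-- The transfer operator at inverse temperature `β`. -/
noncomputable def transfer (β : ℝ) (H : Sig → ℝ) (Φ : Sig → ℝ) : Sig → ℝ :=
  fun x => Real.exp (-β * H (cons2 0 x)) * Φ (cons2 0 x)
         + Real.exp (-β * H (cons2 1 x)) * Φ (cons2 1 x)

/-- The cylinder set determined by a finite word. -/
def cyl (w : List (Fin 2)) : Set Sig := {x | ∀ i : ℕ, ∀ h : i < w.length, x i = w.get ⟨i, h⟩}

/-- The fixed point `0^∞`. -/
def zpt : Sig := fun _ => 0

/-- The fixed point `1^∞`. -/
def opt : Sig := fun _ => 1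

/-- The minimizing ergodic value of `H`. -/
noncomputable def Hbar (H : Sig → ℝ) : ℝ :=
  sInf {r : ℝ | ∃ μ : Measure Sig, IsProbabilityMeasure μ ∧ μ.map shft = μ ∧ r = ∫ x, H x ∂μ}

/-- A minimizing measure for `H`. -/
def IsMinimizing (H : Sig → ℝ) (μ : Measure Sig) : Prop :=
  IsProbabilityMeasure μ ∧ μ.map shft = μ ∧
  ∀ ν : Measure Sig, IsProbabilityMeasure ν → ν.map shft = ν →
    ∫ x, H x ∂μ ≤ ∫ x, H x ∂ν

/-- The (topological) support of a measure. -/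
def mSupport (μ : Measure Sig) : Set Sig := {x | ∀ U : Set Sig, IsOpen U → x ∈ U → μ U ≠ 0}

/-- The Mather set of `H` : union of supports of minimizing measures. -/
def mather (H : Sig → ℝ) : Set Sig := {x | ∃ μ : Measure Sig, IsMinimizing H μ ∧ x ∈ mSupport μ}

/-- Birkhoff sum of the normalized potential. -/
noncomputable def birk (H : Sig → ℝ) (k : ℕ) (z : Sig) : ℝ :=
  ∑ i ∈ Finset.range k, (H (shft^[i] z) - Hbar H)

/-- The quantity `S_n^p(x,y)` (an infimum in `EReal`, `+∞` when the defining set is empty). -/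
noncomputable def SBar (H : Sig → ℝ) (p n : ℕ) (x y : Sig) : EReal :=
  sInf {s : EReal | ∃ k : ℕ, n ≤ k ∧ ∃ z : Sig, nClose p z x ∧ nClose p (shft^[k] z) y ∧
    s = (birk H k z : EReal)}

/-- The Peierls barrier `h(x,y)`; since `S_n^p(x,y)` is nondecreasing in both `n` and `p`,
the double limit is a double supremum. -/
noncomputable def peierls (H : Sig → ℝ) (x y : Sig) : EReal := ⨆ p : ℕ, ⨆ n : ℕ, SBar H p n x y

/-- The Lax-Oleinik operator (the two preimages of `y` under the shift are `0y` and `1y`). -/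
noncomputable def laxOleinik (H V : Sig → ℝ) : Sig → ℝ :=
  fun y => min (V (cons2 0 y) + H (cons2 0 y)) (V (cons2 1 y) + H (cons2 1 y))

/-- A calibrated sub-action of `H`. -/
def IsCalibrated (H V : Sig → ℝ) : Prop :=
  Continuous V ∧ laxOleinik H V = fun y => V y + Hbar H

/-- Membership in the class `𝕂`. -/
def InK (H V : Sig → ℝ) : Prop :=
  Continuous V ∧ ∀ n : ℕ, 1 ≤ n → Var V n ≤ ∑' k : ℕ, Var H (n + 1 + k)

/-- A reduced double-well type potential with data `(H_n^0)`, `(H_n^1)` (indexed from `n = 1`). -/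
structure ReducedDW (H : Sig → ℝ) (H0 H1 : ℕ → ℝ) : Prop where
  cont : Continuous H
  nonneg : ∀ x, 0 ≤ H x
  svar : SummableVar H
  zero : ∀ x ∈ cyl [0, 0] ∪ cyl [1, 1], H x = 0
  pos0 : ∀ n, 1 ≤ n → 0 < H0 n
  pos1 : ∀ n, 1 ≤ n → 0 < H1 n
  val0 : ∀ n, 1 ≤ n → ∀ x ∈ cyl (0 :: (List.replicate n 1 ++ [0])), H x = H0 n
  val1 : ∀ n, 1 ≤ n → ∀ x ∈ cyl (1 :: (List.replicate n 0 ++ [1])), H x = H1 n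
  bdd0 : ∀ k : ℕ, BddAbove (Set.range fun n : ℕ => |H0 (k + 1) - H0 (k + 1 + n)|)
  bdd1 : ∀ k : ℕ, BddAbove (Set.range fun n : ℕ => |H1 (k + 1) - H1 (k + 1 + n)|)
  sum0 : Summable (fun k : ℕ => ⨆ n : ℕ, |H0 (k + 1) - H0 (k + 1 + n)|)
  sum1 : Summable (fun k : ℕ => ⨆ n : ℕ, |H1 (k + 1) - H1 (k + 1 + n)|)

/-- A double-well type potential with data `a_n^0, a_n^1, b_n^0, b_n^1` (indexed from `n = 1`). -/
structure DW (H : Sig → ℝ) (a0 a1 b0 b1 : ℕ → ℝ) : Prop where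
  cont : Continuous H
  nonneg : ∀ x, 0 ≤ H x
  svar : SummableVar H
  anneg0 : ∀ n, 1 ≤ n → 0 ≤ a0 n
  anneg1 : ∀ n, 1 ≤ n → 0 ≤ a1 n
  bpos0 : ∀ n, 1 ≤ n → 0 < b0 n
  bpos1 : ∀ n, 1 ≤ n → 0 < b1 n
  vala0 : ∀ n, 1 ≤ n → ∀ x ∈ cyl (0 :: (List.replicate n 0 ++ [1])), H x = a0 n
  vala1 : ∀ n, 1 ≤ n → ∀ x ∈ cyl (1 :: (List.replicate n 1 ++ [0])), H x = a1 n
  valb0 : ∀ n, 1 ≤ n → ∀ x ∈ cyl (0 :: (List.replicate n 1 ++ [0])), H x = b0 n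
  valb1 : ∀ n, 1 ≤ n → ∀ x ∈ cyl (1 :: (List.replicate n 0 ++ [1])), H x = b1 n
  suma0 : Summable (fun n : ℕ => ((n + 1 : ℕ) : ℝ) * a0 (n + 1))
  suma1 : Summable (fun n : ℕ => ((n + 1 : ℕ) : ℝ) * a1 (n + 1))
  bddb0 : ∀ k : ℕ, BddAbove (Set.range fun n : ℕ => |b0 (k + 1) - b0 (k + 1 + n)|)
  bddb1 : ∀ k : ℕ, BddAbove (Set.range fun n : ℕ => |b1 (k + 1) - b1 (k + 1 + n)|)
  sumb0 : Summable (fun k : ℕ => ⨆ n : ℕ, |b0 (k + 1) - b0 (k + 1 + n)|)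
  sumb1 : Summable (fun k : ℕ => ⨆ n : ℕ, |b1 (k + 1) - b1 (k + 1 + n)|)

/-- The series `F_β(λ) = Σ_{k≥1} λ^{-k} e^{-β H_k}`. -/
noncomputable def Fser (β : ℝ) (Hs : ℕ → ℝ) (lam : ℝ) : ℝ :=
  ∑' k : ℕ, (lam ^ (k + 1))⁻¹ * Real.exp (-β * Hs (k + 1))

/-- The series `F̃_β(λ) = Σ_{k≥1} k λ^{-k} e^{-β H_k}`. -/
noncomputable def Ftser (β : ℝ) (Hs : ℕ → ℝ) (lam : ℝ) : ℝ :=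
  ∑' k : ℕ, ((k + 1 : ℕ) : ℝ) * (lam ^ (k + 1))⁻¹ * Real.exp (-β * Hs (k + 1))

/-- The data of the Ruelle-Perron-Frobenius solution and Gibbs measure at inverse temperature `β`:
eigenfunction `Φ` (positive, continuous, max 1), eigenvalue `lam`, eigenprobability `ν`,
and the Gibbs measure `μ = Φ ν / ∫ Φ dν`. -/
def GibbsData (H : Sig → ℝ) (β : ℝ) (Φ : Sig → ℝ) (lam : ℝ) (ν μ : Measure Sig) : Prop :=
  Continuous Φ ∧ (∀ x, 0 < Φ x) ∧ IsGreatest (Set.range Φ) 1 ∧ 0 < lam ∧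
  (transfer β H Φ = fun x => lam * Φ x) ∧
  IsProbabilityMeasure ν ∧
  (∀ f : Sig → ℝ, Continuous f → ∫ x, transfer β H f x ∂ν = lam * ∫ x, f x ∂ν) ∧
  μ = (ENNReal.ofReal (∫ x, Φ x ∂ν))⁻¹ • ν.withDensity (fun x => ENNReal.ofReal (Φ x))

-- ### helpers
lemma cons2_zero (i : Fin 2) (x : Sig) : cons2 i x 0 = i := rfl
lemma cons2_succ (i : Fin 2) (x : Sig) (n : ℕ) : cons2 i x (n + 1) = x n := rfl

lemma fin2_cases (a : Fin 2) : a = 0 ∨ a = 1 := by omega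
lemma fin2_ne (a b : Fin 2) (h : a ≠ b) (c : Fin 2) : c = a ∨ c = b := by omega

/-- the word of length `k` all `i` followed by `j`. -/
lemma mem_cyl_cons (a : Fin 2) (w : List (Fin 2)) (x : Sig) :
    x ∈ cyl (a :: w) ↔ x 0 = a ∧ (fun n => x (n + 1)) ∈ cyl w := by
  constructor
  · intro h
    refine ⟨h 0 (by simp), fun i hi => ?_⟩
    simpa using h (i + 1) (by simpa using hi)
  · rintro ⟨h0, h⟩ i hi
    cases i with
    | zero => simpa using h0
    | succ k => simpa using h k (by simpa using hi)

lemma mem_cyl_cons2 (a b : Fin 2) (w : List (Fin 2)) (x : Sig) :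
    cons2 a x ∈ cyl (b :: w) ↔ a = b ∧ x ∈ cyl w := by
  rw [mem_cyl_cons]
  constructor
  · rintro ⟨h0, h⟩; exact ⟨h0, h⟩
  · rintro ⟨h0, h⟩; exact ⟨h0, h⟩

lemma mem_cyl_rep (i j : Fin 2) (k : ℕ) (x : Sig) :
    x ∈ cyl (List.replicate k i ++ [j]) ↔ (∀ n, n < k → x n = i) ∧ x k = j := by
  constructor
  · intro h
    constructor
    · intro n hn
      have := h n (by simp; omega)
      simpa [List.getElem_append, List.getElem_replicate, hn] using this
    · have := h k (by simp)
      simpa [List.getElem_append, List.getElem_replicate] using this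
  · rintro ⟨h1, h2⟩ n hn
    simp only [List.length_append, List.length_replicate, List.length_cons, List.length_nil] at hn
    rcases lt_or_ge n k with h | h
    · simp [List.get_eq_getElem, List.getElem_append, List.getElem_replicate, h, h1 n h]
    · have : n = k := by omega
      subst this
      simp [List.get_eq_getElem, List.getElem_append, List.getElem_replicate, h2]

lemma mem_cyl_repOnly (i : Fin 2) (k : ℕ) (x : Sig) :
    x ∈ cyl (List.replicate k i) ↔ (∀ n, n < k → x n = i) := by
  constructor
  · intro h n hn
    have := h n (by simpa using hn)
    simpa [List.getElem_replicate] using this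
  · intro h n hn
    simp only [List.length_replicate] at hn
    simp [List.get_eq_getElem, List.getElem_replicate, h n hn]

lemma isClopen_cyl (w : List (Fin 2)) : IsClopen (cyl w) := by
  have : cyl w = ⋂ (i : Fin w.length), {x : Sig | x i.1 = w.get i} := by
    ext x
    simp only [Set.mem_iInter, Set.mem_setOf_eq, cyl]
    exact ⟨fun h i => h i.1 i.2, fun h i hi => h ⟨i, hi⟩⟩
  rw [this]
  have hset : ∀ (n : ℕ) (c : Fin 2), {x : Sig | x n = c} = (fun x : Sig => x n) ⁻¹' {c} := by
    intro n c; rfl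
  constructor
  · exact isClosed_iInter fun i => by
      rw [hset]; exact (isClosed_discrete {w.get i}).preimage (continuous_apply (i : ℕ))
  · exact isOpen_iInter_of_finite fun i => by
      rw [hset]; exact (isOpen_discrete {w.get i}).preimage (continuous_apply (i : ℕ))

lemma measurableSet_cyl (w : List (Fin 2)) : MeasurableSet (cyl w) := by
  have : cyl w = ⋂ (i : Fin w.length), {x : Sig | x i.1 = w.get i} := by
    ext x
    simp only [Set.mem_iInter, Set.mem_setOf_eq, cyl]
    exact ⟨fun h i => h i.1 i.2, fun h i hi => h ⟨i, hi⟩⟩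
  rw [this]
  exact MeasurableSet.iInter fun i =>
    (measurable_pi_apply (i : ℕ)) (measurableSet_singleton _)

lemma measurableSet_sing (x : Sig) : MeasurableSet ({x} : Set Sig) := by
  have : ({x} : Set Sig) = ⋂ (n : ℕ), {y : Sig | y n = x n} := by
    ext y
    simp only [Set.mem_singleton_iff, Set.mem_iInter, Set.mem_setOf_eq]
    exact ⟨fun h n => by rw [h], fun h => funext h⟩
  rw [this]
  exact MeasurableSet.iInter fun n =>
    (measurable_pi_apply n) (measurableSet_singleton _)

lemma continuous_cons2 (i : Fin 2) : Continuous (cons2 i) := by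
  apply continuous_pi
  intro n
  cases n with
  | zero => exact continuous_const
  | succ k => exact continuous_apply k

noncomputable def pre (i : Fin 2) : ℕ → Sig → Sig
  | 0, t => t
  | m + 1, t => cons2 i (pre i m t)

lemma pre_apply (i : Fin 2) (m : ℕ) (t : Sig) (n : ℕ) :
    pre i m t n = if n < m then i else t (n - m) := by
  induction m generalizing n with
  | zero => simp [pre]
  | succ k ih =>
    cases n with
    | zero => simp [pre, cons2]
    | succ l =>
      rw [show pre i (k+1) t (l+1) = pre i k t l from rfl, ih]
      by_cases h : l < k
      · simp [h, show l + 1 < k + 1 by omega]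
      · simp [h, show ¬ (l + 1 < k + 1) by omega, Nat.succ_sub_succ]

lemma tendsto_pre (i : Fin 2) (s : Sig) :
    Tendsto (fun m => pre i m s) atTop (𝓝 (fun _ => i : Sig)) := by
  rw [tendsto_pi_nhds]
  intro n
  refine Tendsto.congr' (f₁ := fun _ => i) ?_ tendsto_const_nhds
  filter_upwards [eventually_ge_atTop (n + 1)] with m hm
  rw [pre_apply]
  simp [show n < m by omega]

lemma transfer_sym (β : ℝ) (H Φ : Sig → ℝ) (i j : Fin 2) (hij : i ≠ j) (x : Sig) :
    transfer β H Φ x = Real.exp (-β * H (cons2 i x)) * Φ (cons2 i x)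
      + Real.exp (-β * H (cons2 j x)) * Φ (cons2 j x) := by
  rcases fin2_cases i with hi | hi <;> rcases fin2_cases j with hj | hj <;>
    subst hi <;> subst hj <;>
      first
        | exact absurd rfl hij
        | rfl
        | (unfold transfer; ring)

section Core

variable (β lam : ℝ) (H Φ : Sig → ℝ) (Hi Hj : ℕ → ℝ)

lemma lam_gt_one (hΦpos : ∀ x, 0 < Φ x)
    (heig : transfer β H Φ = fun x => lam * Φ x)
    (hz : ∀ (a : Fin 2) (x : Sig), x 0 = a → H (cons2 a x) = 0) : 1 < lam := by
  have h0 : cons2 0 zpt = zpt := by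
    funext n; cases n <;> rfl
  have hzz : H (cons2 0 zpt) = 0 := hz 0 zpt rfl
  have he := congrFun heig zpt
  rw [transfer, hzz, h0] at he
  simp only [neg_mul, mul_zero, neg_zero, Real.exp_zero, one_mul] at he
  have hpos : 0 < Real.exp (-(β * H (cons2 1 zpt))) * Φ (cons2 1 zpt) :=
    mul_pos (Real.exp_pos _) (hΦpos _)
  nlinarith [hΦpos zpt]

lemma summable_w (hβ : 0 < β) (hlam : 1 < lam) (hHi : ∀ k, 1 ≤ k → 0 ≤ Hi k) :
    Summable (fun m : ℕ => (lam ^ (m + 1))⁻¹ * Real.exp (-β * Hi (m + 1))) := by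
  have hlam0 : (0:ℝ) < lam := lt_trans one_pos hlam
  apply Summable.of_nonneg_of_le
    (fun m => by positivity)
    (fun m => ?_)
    (((summable_geometric_of_lt_one (by positivity) (inv_lt_one_of_one_lt₀ hlam)).mul_left
      lam⁻¹))
  · have h1 : Real.exp (-β * Hi (m + 1)) ≤ 1 := by
      rw [Real.exp_le_one_iff]
      have := hHi (m+1) (by omega)
      nlinarith
    have h2 : (lam ^ (m + 1))⁻¹ = lam⁻¹ * (lam⁻¹) ^ m := by
      rw [← inv_pow, pow_succ]; ring
    calc (lam ^ (m + 1))⁻¹ * Real.exp (-β * Hi (m + 1))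
        ≤ (lam ^ (m + 1))⁻¹ * 1 := by
          apply mul_le_mul_of_nonneg_left h1 (by positivity)
      _ = lam⁻¹ * (lam⁻¹) ^ m := by rw [mul_one, h2]

lemma w_pos (hlam : 1 < lam) (m : ℕ) :
    0 < (lam ^ (m + 1))⁻¹ * Real.exp (-β * Hi (m + 1)) := by
  have hlam0 : (0:ℝ) < lam := lt_trans one_pos hlam
  positivity

lemma tele (hβ : 0 < β) (hlam : 1 < lam)
    (hΦpos : ∀ x, 0 < Φ x) (hΦle : ∀ x, Φ x ≤ 1)
    (heig : transfer β H Φ = fun x => lam * Φ x)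
    (i j : Fin 2) (hij : i ≠ j)
    (hz : ∀ (a : Fin 2) (x : Sig), x 0 = a → H (cons2 a x) = 0)
    (hvi : ∀ k, 1 ≤ k → ∀ x ∈ cyl (j :: (List.replicate k i ++ [j])), H x = Hi k)
    (hHi : ∀ k, 1 ≤ k → 0 ≤ Hi k)
    (t : Sig) (ht : t 0 = j) :
    HasSum (fun m : ℕ => (lam ^ (m + 1))⁻¹ * Real.exp (-β * Hi (m + 1))
      * Φ (cons2 j (pre i (m + 1) t))) (Φ (cons2 i t)) := by
  have hlam0 : (0:ℝ) < lam := lt_trans one_pos hlam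
  set u : ℕ → ℝ := fun m => Φ (pre i (m + 1) t) with hu
  set f : ℕ → ℝ := fun m => (lam ^ (m + 1))⁻¹ * Real.exp (-β * Hi (m + 1))
      * Φ (cons2 j (pre i (m + 1) t)) with hf
  -- the recursion
  have hrec : ∀ m : ℕ, lam * u m
      = u (m + 1) + Real.exp (-β * Hi (m + 1)) * Φ (cons2 j (pre i (m + 1) t)) := by
    intro m
    have hx0 : (pre i (m + 1) t) 0 = i := by rw [pre_apply]; simp
    have hconsi : cons2 i (pre i (m + 1) t) = pre i (m + 2) t := rfl
    have hHzero : H (cons2 i (pre i (m + 1) t)) = 0 := hz i _ hx0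
    have hmem : cons2 j (pre i (m + 1) t) ∈ cyl (j :: (List.replicate (m + 1) i ++ [j])) := by
      rw [mem_cyl_cons2]
      refine ⟨rfl, ?_⟩
      rw [mem_cyl_rep]
      constructor
      · intro n hn; rw [pre_apply]; simp [hn]
      · rw [pre_apply]; simp [ht]
    have hHj : H (cons2 j (pre i (m + 1) t)) = Hi (m + 1) :=
      hvi (m + 1) (by omega) _ hmem
    have he := congrFun heig (pre i (m + 1) t)
    rw [transfer_sym β H Φ i j hij] at he
    rw [hHzero, hconsi, hHj] at he
    simp only [mul_zero, neg_mul, neg_zero, Real.exp_zero, one_mul] at he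
    rw [hu]
    simp only [neg_mul] at he ⊢
    linarith [he]
  -- partial sums telescope
  have hpartial : ∀ N : ℕ, ∑ m ∈ Finset.range N, f m
      = Φ (cons2 i t) - (lam ^ N)⁻¹ * u N := by
    intro N
    induction N with
    | zero =>
      simp [u, pre]
    | succ n ih =>
      rw [Finset.sum_range_succ, ih]
      have hfn : f n = (lam ^ n)⁻¹ * u n - (lam ^ (n + 1))⁻¹ * u (n + 1) := by
        have h := hrec n
        have : Real.exp (-β * Hi (n + 1)) * Φ (cons2 j (pre i (n + 1) t))
            = lam * u n - u (n + 1) := by linarith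
        rw [hf]
        simp only []
        rw [mul_assoc, this]
        have hpow : lam ^ (n + 1) = lam ^ n * lam := pow_succ lam n
        field_simp
        ring
      rw [hfn]; ring
  -- summability
  have hsum : Summable f := by
    apply Summable.of_nonneg_of_le (fun m => ?_) (fun m => ?_)
      (summable_w β lam Hi hβ hlam hHi)
    · have := (hΦpos (cons2 j (pre i (m + 1) t))).le
      positivity
    · simp only [hf]
      have h1 := hΦle (cons2 j (pre i (m + 1) t))
      have h2 := (hΦpos (cons2 j (pre i (m + 1) t))).le
      have hw : 0 ≤ (lam ^ (m + 1))⁻¹ * Real.exp (-β * Hi (m + 1)) := by positivity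
      nlinarith
  -- limit of partial sums
  have hlim : Tendsto (fun N => ∑ m ∈ Finset.range N, f m) atTop (𝓝 (Φ (cons2 i t))) := by
    have h1 : Tendsto (fun N : ℕ => (lam ^ N)⁻¹ * u N) atTop (𝓝 0) := by
      apply squeeze_zero (fun N => ?_) (fun N => ?_)
        (tendsto_pow_atTop_nhds_zero_of_lt_one (by positivity) (inv_lt_one_of_one_lt₀ hlam))
      · exact mul_nonneg (by positivity) (hΦpos _).le
      · calc (lam ^ N)⁻¹ * u N ≤ (lam ^ N)⁻¹ * 1 :=
            mul_le_mul_of_nonneg_left (hΦle _) (by positivity)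
          _ = lam⁻¹ ^ N := by rw [mul_one, inv_pow]
    have h2 : Tendsto (fun N => Φ (cons2 i t) - (lam ^ N)⁻¹ * u N) atTop
        (𝓝 (Φ (cons2 i t) - 0)) := tendsto_const_nhds.sub h1
    rw [sub_zero] at h2
    refine h2.congr fun N => (hpartial N).symm
  have := hsum.hasSum
  have heq : ∑' m, f m = Φ (cons2 i t) :=
    tendsto_nhds_unique (this.tendsto_sum_nat) hlim
  rwa [heq] at this

end Core

section Key

variable (β lam : ℝ) (H Φ : Sig → ℝ) (Hi Hj : ℕ → ℝ)

lemma keyconst (hβ : 0 < β) (hlam : 1 < lam)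
    (hΦc : Continuous Φ) (hΦpos : ∀ x, 0 < Φ x) (hΦle : ∀ x, Φ x ≤ 1)
    (heig : transfer β H Φ = fun x => lam * Φ x)
    (i j : Fin 2) (hij : i ≠ j)
    (hz : ∀ (a : Fin 2) (x : Sig), x 0 = a → H (cons2 a x) = 0)
    (hvi : ∀ k, 1 ≤ k → ∀ x ∈ cyl (j :: (List.replicate k i ++ [j])), H x = Hi k)
    (hvj : ∀ k, 1 ≤ k → ∀ x ∈ cyl (i :: (List.replicate k j ++ [i])), H x = Hj k)
    (hHi : ∀ k, 1 ≤ k → 0 ≤ Hi k) (hHj : ∀ k, 1 ≤ k → 0 ≤ Hj k) :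
    Fser β Hi lam * Fser β Hj lam = 1 ∧
      ∀ t : Sig, t 0 = j → Φ (cons2 i t) = Φ (cons2 i (fun _ => j)) := by
  have hlam0 : (0:ℝ) < lam := lt_trans one_pos hlam
  set wk : ℕ → ℝ := fun m => (lam ^ (m + 1))⁻¹ * Real.exp (-β * Hi (m + 1)) with hwk
  set vk : ℕ → ℝ := fun m => (lam ^ (m + 1))⁻¹ * Real.exp (-β * Hj (m + 1)) with hvk
  have hws : Summable wk := summable_w β lam Hi hβ hlam hHi
  have hvs : Summable vk := summable_w β lam Hj hβ hlam hHj
  have hwp : ∀ m, 0 < wk m := fun m => w_pos β lam Hi hlam m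
  have hvp : ∀ m, 0 < vk m := fun m => w_pos β lam Hj hlam m
  set W : ℝ := ∑' m, wk m with hW
  set V : ℝ := ∑' m, vk m with hV
  have hWF : Fser β Hi lam = W := rfl
  have hVF : Fser β Hj lam = V := rfl
  -- the compact set [j]
  have hKclosed : IsClosed {t : Sig | t 0 = j} := by
    have : {t : Sig | t 0 = j} = (fun t : Sig => t 0) ⁻¹' {j} := rfl
    rw [this]
    exact (isClosed_discrete {j}).preimage (continuous_apply 0)
  have hKc : IsCompact {t : Sig | t 0 = j} := hKclosed.isCompact
  have hKne : Set.Nonempty {t : Sig | t 0 = j} := ⟨(fun _ => j), rfl⟩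
  set g : Sig → ℝ := fun t => Φ (cons2 i t) with hg
  have hgc : Continuous g := hΦc.comp (continuous_cons2 i)
  obtain ⟨ts, hts, hmax⟩ := hKc.exists_isMaxOn hKne hgc.continuousOn
  obtain ⟨t0, ht0, hmin⟩ := hKc.exists_isMinOn hKne hgc.continuousOn
  set M : ℝ := g ts with hM
  set m0 : ℝ := g t0 with hm0
  have hMpos : 0 < M := hΦpos _
  have hm0pos : 0 < m0 := hΦpos _
  have hmax' : ∀ t : Sig, t 0 = j → g t ≤ M := fun t ht => hmax ht
  have hmin' : ∀ t : Sig, t 0 = j → m0 ≤ g t := fun t ht => hmin ht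
  have hpre0 : ∀ (a : Fin 2) (m : ℕ) (s : Sig), (pre a (m + 1) s) 0 = a := by
    intro a m s; rw [pre_apply]; simp
  -- telescoping instantiations
  have teleIJ : ∀ t : Sig, t 0 = j →
      HasSum (fun m : ℕ => wk m * Φ (cons2 j (pre i (m + 1) t))) (Φ (cons2 i t)) := by
    intro t ht
    have := tele β lam H Φ Hi hβ hlam hΦpos hΦle heig i j hij hz hvi hHi t ht
    refine this.congr_fun fun m => ?_
    rw [hwk, mul_assoc]
  have teleJI : ∀ s : Sig, s 0 = i →
      HasSum (fun m : ℕ => vk m * g (pre j (m + 1) s)) (Φ (cons2 j s)) := by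
    intro s hs
    have := tele β lam H Φ Hj hβ hlam hΦpos hΦle heig j i (Ne.symm hij) hz hvj hHj s hs
    refine this.congr_fun fun m => ?_
    rw [hvk, mul_assoc]
  -- upper and lower bounds for Φ (cons2 j s)
  have hb_up : ∀ s : Sig, s 0 = i → Φ (cons2 j s) ≤ V * M := by
    intro s hs
    have h := teleJI s hs
    rw [← h.tsum_eq]
    calc ∑' m, vk m * g (pre j (m + 1) s) ≤ ∑' m, vk m * M := by
          apply Summable.tsum_le_tsum (fun m => ?_) h.summable (hvs.mul_right M)
          exact mul_le_mul_of_nonneg_left (hmax' _ (hpre0 j m s)) (hvp m).le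
      _ = V * M := by rw [tsum_mul_right]
  have hb_lo : ∀ s : Sig, s 0 = i → V * m0 ≤ Φ (cons2 j s) := by
    intro s hs
    have h := teleJI s hs
    rw [← h.tsum_eq]
    calc V * m0 = ∑' m, vk m * m0 := by rw [tsum_mul_right]
      _ ≤ ∑' m, vk m * g (pre j (m + 1) s) := by
          apply Summable.tsum_le_tsum (fun m => ?_) (hvs.mul_right m0) h.summable
          exact mul_le_mul_of_nonneg_left (hmin' _ (hpre0 j m s)) (hvp m).le
  -- characteristic equation
  have hts0 := hts
  have hup : M ≤ (W * V) * M := by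
    have h := teleIJ ts hts0
    have heq : M = ∑' m, wk m * Φ (cons2 j (pre i (m + 1) ts)) := h.tsum_eq.symm
    have hbd : ∑' m, wk m * Φ (cons2 j (pre i (m + 1) ts)) ≤ (W * V) * M := by
      calc ∑' m, wk m * Φ (cons2 j (pre i (m + 1) ts)) ≤ ∑' m, wk m * (V * M) := by
            apply Summable.tsum_le_tsum (fun m => ?_) h.summable (hws.mul_right _)
            exact mul_le_mul_of_nonneg_left (hb_up _ (hpre0 i m ts)) (hwp m).le
        _ = (W * V) * M := by rw [tsum_mul_right]; ring
    linarith
  have hlo : (W * V) * m0 ≤ m0 := by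
    have h := teleIJ t0 ht0
    have heq : m0 = ∑' m, wk m * Φ (cons2 j (pre i (m + 1) t0)) := h.tsum_eq.symm
    have hbd : (W * V) * m0 ≤ ∑' m, wk m * Φ (cons2 j (pre i (m + 1) t0)) := by
      calc (W * V) * m0 = ∑' m, wk m * (V * m0) := by rw [tsum_mul_right]; ring
        _ ≤ ∑' m, wk m * Φ (cons2 j (pre i (m + 1) t0)) := by
            apply Summable.tsum_le_tsum (fun m => ?_) (hws.mul_right _) h.summable
            exact mul_le_mul_of_nonneg_left (hb_lo _ (hpre0 i m t0)) (hwp m).le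
    linarith
  have hWV : W * V = 1 := by
    have h1 : 1 ≤ W * V := by nlinarith
    have h2 : W * V ≤ 1 := by nlinarith
    linarith
  -- equality of all terms at the max
  have hceq : ∀ m : ℕ, Φ (cons2 j (pre i (m + 1) ts)) = V * M := by
    intro m
    by_contra hne
    have hlt : Φ (cons2 j (pre i (m + 1) ts)) < V * M :=
      lt_of_le_of_ne (hb_up _ (hpre0 i m ts)) hne
    have h := teleIJ ts hts0
    have hstrict : ∑' m', wk m' * Φ (cons2 j (pre i (m' + 1) ts)) < ∑' m', wk m' * (V * M) := by
      apply Summable.tsum_lt_tsum (fun m' => mul_le_mul_of_nonneg_left (hb_up _ (hpre0 i m' ts)) (hwp m').le)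
        (mul_lt_mul_of_pos_left hlt (hwp m)) h.summable (hws.mul_right _)
    rw [h.tsum_eq, tsum_mul_right] at hstrict
    nlinarith
  have hceq' : ∀ m : ℕ, Φ (cons2 j (pre i (m + 1) t0)) = V * m0 := by
    intro m
    by_contra hne
    have hlt : V * m0 < Φ (cons2 j (pre i (m + 1) t0)) :=
      lt_of_le_of_ne (hb_lo _ (hpre0 i m t0)) (Ne.symm hne)
    have h := teleIJ t0 ht0
    have hstrict : ∑' m', wk m' * (V * m0) < ∑' m', wk m' * Φ (cons2 j (pre i (m' + 1) t0)) := by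
      apply Summable.tsum_lt_tsum (fun m' => mul_le_mul_of_nonneg_left (hb_lo _ (hpre0 i m' t0)) (hwp m').le)
        (mul_lt_mul_of_pos_left hlt (hwp m)) (hws.mul_right _) h.summable
    rw [h.tsum_eq, tsum_mul_right] at hstrict
    nlinarith
  -- second level: all g-values at points approaching (const j) equal M
  have hseq : ∀ m : ℕ, g (pre j (m + 1) (pre i 1 ts)) = M := by
    intro m
    by_contra hne
    have hpmem : (pre i 1 ts) 0 = i := hpre0 i 0 ts
    have h2 := teleJI (pre i 1 ts) hpmem
    have hVM : Φ (cons2 j (pre i 1 ts)) = V * M := hceq 0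
    rw [hVM] at h2
    have hlt : g (pre j (m + 1) (pre i 1 ts)) < M :=
      lt_of_le_of_ne (hmax' _ (hpre0 j m _)) hne
    have hstrict : ∑' m', vk m' * g (pre j (m' + 1) (pre i 1 ts)) < ∑' m', vk m' * M := by
      apply Summable.tsum_lt_tsum (fun m' => mul_le_mul_of_nonneg_left (hmax' _ (hpre0 j m' _)) (hvp m').le)
        (mul_lt_mul_of_pos_left hlt (hvp m)) h2.summable (hvs.mul_right _)
    rw [h2.tsum_eq, tsum_mul_right] at hstrict
    exact lt_irrefl _ hstrict
  have hseq' : ∀ m : ℕ, g (pre j (m + 1) (pre i 1 t0)) = m0 := by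
    intro m
    by_contra hne
    have hpmem : (pre i 1 t0) 0 = i := hpre0 i 0 t0
    have h2 := teleJI (pre i 1 t0) hpmem
    have hVM : Φ (cons2 j (pre i 1 t0)) = V * m0 := hceq' 0
    rw [hVM] at h2
    have hlt : m0 < g (pre j (m + 1) (pre i 1 t0)) :=
      lt_of_le_of_ne (hmin' _ (hpre0 j m _)) (Ne.symm hne)
    have hstrict : ∑' m', vk m' * m0 < ∑' m', vk m' * g (pre j (m' + 1) (pre i 1 t0)) := by
      apply Summable.tsum_lt_tsum (fun m' => mul_le_mul_of_nonneg_left (hmin' _ (hpre0 j m' _)) (hvp m').le)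
        (mul_lt_mul_of_pos_left hlt (hvp m)) (hvs.mul_right _) h2.summable
    rw [h2.tsum_eq, tsum_mul_right] at hstrict
    exact lt_irrefl _ hstrict
  -- pass to the limit
  have hlimit : ∀ (s : Sig) (c : ℝ), (∀ m : ℕ, g (pre j (m + 1) s) = c) →
      g (fun _ => j) = c := by
    intro s c hc
    have ht1 : Tendsto (fun m : ℕ => pre j (m + 1) s) atTop (𝓝 (fun _ => j : Sig)) :=
      (tendsto_pre j s).comp (tendsto_add_atTop_nat 1)
    have ht2 : Tendsto (fun m : ℕ => g (pre j (m + 1) s)) atTop (𝓝 (g (fun _ => j))) :=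
      (hgc.tendsto _).comp ht1
    have ht3 : Tendsto (fun _ : ℕ => c) atTop (𝓝 (g (fun _ => j))) :=
      ht2.congr hc
    exact (tendsto_nhds_unique tendsto_const_nhds ht3).symm
  have hgM : g (fun _ => j) = M := hlimit _ _ hseq
  have hgm : g (fun _ => j) = m0 := hlimit _ _ hseq'
  constructor
  · rw [hWF, hVF]; exact hWV
  · intro t ht
    have h1 : g t ≤ M := hmax' t ht
    have h2 : m0 ≤ g t := hmin' t ht
    have : g t = g (fun _ => j) := by rw [hgM] at *; linarith [hgm, hgM]
    exact this

end Key

section Meas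

lemma indicator_clopen_continuous {s : Set Sig} (hs : IsClopen s) (c : ℝ) :
    Continuous (s.indicator (fun _ => c)) := by
  classical
  have : s.indicator (fun _ => c) = s.piecewise (fun _ => c) (fun _ => 0) := by
    ext x; by_cases h : x ∈ s <;> simp [Set.indicator, Set.piecewise, h]
  rw [this]
  exact continuous_const.piecewise (by simp [hs.frontier_eq]) continuous_const

lemma indicator_cons_apply (a b : Fin 2) (w : List (Fin 2)) (x : Sig) :
    (cyl (a :: w)).indicator (fun _ => (1:ℝ)) (cons2 b x)
      = if b = a then (cyl w).indicator (fun _ => (1:ℝ)) x else 0 := by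
  by_cases hb : b = a
  · subst hb
    by_cases hx : x ∈ cyl w
    · rw [Set.indicator_of_mem ((mem_cyl_cons2 b b w x).2 ⟨rfl, hx⟩), if_pos rfl,
        Set.indicator_of_mem hx]
    · rw [Set.indicator_of_notMem, if_pos rfl, Set.indicator_of_notMem hx]
      intro hmem; exact hx ((mem_cyl_cons2 _ _ _ _).1 hmem).2
  · rw [if_neg hb, Set.indicator_of_notMem]
    intro hmem; exact hb ((mem_cyl_cons2 _ _ _ _).1 hmem).1

lemma transfer_indicator (β : ℝ) (H : Sig → ℝ) (a : Fin 2) (w : List (Fin 2)) (x : Sig) :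
    transfer β H ((cyl (a :: w)).indicator fun _ => (1:ℝ)) x
      = Real.exp (-β * H (cons2 a x)) * (cyl w).indicator (fun _ => (1:ℝ)) x := by
  unfold transfer
  rcases fin2_cases a with h | h <;> subst h <;>
    simp [indicator_cons_apply, show (1 : Fin 2) ≠ 0 by decide, show (0 : Fin 2) ≠ 1 by decide]

lemma transfer_cont (β : ℝ) (H f : Sig → ℝ) (hH : Continuous H) (hf : Continuous f) :
    Continuous (transfer β H f) := by
  unfold transfer
  have h0 : Continuous fun x : Sig => Real.exp (-β * H (cons2 0 x)) :=
    Real.continuous_exp.comp (continuous_const.mul (hH.comp (continuous_cons2 0)))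
  have h1 : Continuous fun x : Sig => Real.exp (-β * H (cons2 1 x)) :=
    Real.continuous_exp.comp (continuous_const.mul (hH.comp (continuous_cons2 1)))
  exact (h0.mul (hf.comp (continuous_cons2 0))).add (h1.mul (hf.comp (continuous_cons2 1)))

variable (β lam : ℝ) (H : Sig → ℝ) (Hi : ℕ → ℝ) (ν : Measure Sig)

lemma integral_indicator_cyl (w : List (Fin 2)) :
    ∫ x, (cyl w).indicator (fun _ => (1:ℝ)) x ∂ν = (ν (cyl w)).toReal := by
  rw [integral_indicator_const (1:ℝ) (measurableSet_cyl w)]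
  simp
  rfl

lemma nu_step
    (hνeig : ∀ f : Sig → ℝ, Continuous f → ∫ x, transfer β H f x ∂ν = lam * ∫ x, f x ∂ν)
    (a : Fin 2) (w : List (Fin 2)) (hval : ℝ)
    (hpt : ∀ x ∈ cyl w, H (cons2 a x) = hval) :
    lam * (ν (cyl (a :: w))).toReal = Real.exp (-β * hval) * (ν (cyl w)).toReal := by
  classical
  set f := (cyl (a :: w)).indicator (fun _ => (1:ℝ)) with hf
  have hfc : Continuous f := indicator_clopen_continuous (isClopen_cyl _) 1
  have h1 := hνeig f hfc
  have h2 : ∫ x, f x ∂ν = (ν (cyl (a :: w))).toReal := integral_indicator_cyl ν _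
  have h3 : ∀ x, transfer β H f x = (cyl w).indicator (fun _ => Real.exp (-β * hval)) x := by
    intro x
    rw [hf, transfer_indicator]
    by_cases hx : x ∈ cyl w
    · rw [Set.indicator_of_mem hx, Set.indicator_of_mem hx, hpt x hx]; ring
    · rw [Set.indicator_of_notMem hx, Set.indicator_of_notMem hx]; ring
  have h4 : ∫ x, transfer β H f x ∂ν = Real.exp (-β * hval) * (ν (cyl w)).toReal := by
    simp only [h3]
    rw [integral_indicator_const _ (measurableSet_cyl w)]
    simp [mul_comm]
    rfl
  rw [h4, h2] at h1
  linarith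

lemma nu_step_le [IsProbabilityMeasure ν]
    (hβ : 0 < β) (hH0 : ∀ x, 0 ≤ H x) (hHc : Continuous H)
    (hνeig : ∀ f : Sig → ℝ, Continuous f → ∫ x, transfer β H f x ∂ν = lam * ∫ x, f x ∂ν)
    (a : Fin 2) (w : List (Fin 2)) :
    lam * (ν (cyl (a :: w))).toReal ≤ (ν (cyl w)).toReal := by
  classical
  set f := (cyl (a :: w)).indicator (fun _ => (1:ℝ)) with hf
  have hfc : Continuous f := indicator_clopen_continuous (isClopen_cyl _) 1
  have h1 := hνeig f hfc
  have h2 : ∫ x, f x ∂ν = (ν (cyl (a :: w))).toReal := integral_indicator_cyl ν _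
  have hgc : Continuous ((cyl w).indicator (fun _ => (1:ℝ))) :=
    indicator_clopen_continuous (isClopen_cyl _) 1
  have h3 : ∀ x, transfer β H f x ≤ (cyl w).indicator (fun _ => (1:ℝ)) x := by
    intro x
    rw [hf, transfer_indicator]
    by_cases hx : x ∈ cyl w
    · simp only [Set.indicator_of_mem hx]
      have hexp : Real.exp (-β * H (cons2 a x)) ≤ 1 := by
        rw [Real.exp_le_one_iff]
        have := hH0 (cons2 a x)
        nlinarith
      linarith
    · simp only [Set.indicator_of_notMem hx]
      simp
  have h4 : ∫ x, transfer β H f x ∂ν ≤ ∫ x, (cyl w).indicator (fun _ => (1:ℝ)) x ∂ν := by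
    apply integral_mono
    · exact ((transfer_cont β H f hHc hfc).integrable_of_hasCompactSupport
        (HasCompactSupport.of_compactSpace _))
    · exact (hgc.integrable_of_hasCompactSupport (HasCompactSupport.of_compactSpace _))
    · exact h3
  rw [integral_indicator_cyl] at h4
  rw [h2] at h1
  linarith

end Meas

section KeyMeas

variable (β lam : ℝ) (H : Sig → ℝ) (Hi : ℕ → ℝ) (ν : Measure Sig)

lemma keymeasure [IsProbabilityMeasure ν]
    (hβ : 0 < β) (hlam : 1 < lam) (hHc : Continuous H) (hH0 : ∀ x, 0 ≤ H x)
    (hνeig : ∀ f : Sig → ℝ, Continuous f → ∫ x, transfer β H f x ∂ν = lam * ∫ x, f x ∂ν)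
    (i j : Fin 2) (hij : i ≠ j)
    (hz : ∀ (a : Fin 2) (x : Sig), x 0 = a → H (cons2 a x) = 0)
    (hvi : ∀ k, 1 ≤ k → ∀ x ∈ cyl (j :: (List.replicate k i ++ [j])), H x = Hi k)
    (hHi : ∀ k, 1 ≤ k → 0 ≤ Hi k) :
    (ν (cyl [j, i])).toReal = Fser β Hi lam * (ν (cyl [i, j])).toReal := by
  classical
  have hlam0 : (0:ℝ) < lam := lt_trans one_pos hlam
  set c : ℝ := (ν (cyl (List.replicate 1 i ++ [j]))).toReal with hc
  have hcnn : 0 ≤ c := ENNReal.toReal_nonneg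
  have hlistC : ∀ k : ℕ, (i :: (List.replicate k i ++ [j]) : List (Fin 2))
      = List.replicate (k+1) i ++ [j] := by
    intro k; simp [List.replicate_succ]
  have hlistZ : ∀ k : ℕ, (i :: List.replicate k i : List (Fin 2))
      = List.replicate (k+1) i := by
    intro k; simp [List.replicate_succ]
  have hν1 : ∀ s : Set Sig, (ν s).toReal ≤ 1 := by
    intro s
    calc (ν s).toReal ≤ (ν Set.univ).toReal :=
          ENNReal.toReal_mono (measure_ne_top ν _) (measure_mono (Set.subset_univ _))
      _ = 1 := by simp
  -- step for Z-cylinders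
  have hZstep : ∀ k : ℕ, 1 ≤ k →
      lam * (ν (cyl (List.replicate (k+1) i))).toReal
        = (ν (cyl (List.replicate k i))).toReal := by
    intro k hk
    have hpt : ∀ x ∈ cyl (List.replicate k i), H (cons2 i x) = 0 := by
      intro x hx
      exact hz i x ((mem_cyl_repOnly i k x).1 hx 0 (by omega))
    have := nu_step β lam H ν hνeig i (List.replicate k i) 0 hpt
    rw [hlistZ k] at this
    simpa using this
  have hZbound : ∀ k : ℕ, (ν (cyl (List.replicate (k+1) i))).toReal ≤ (lam⁻¹)^k := by
    intro k
    induction k with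
    | zero => simpa using hν1 _
    | succ n ih =>
      have hstep := hZstep (n+1) (by omega)
      have hinv : (0:ℝ) < lam⁻¹ := inv_pos.mpr hlam0
      have ha : (ν (cyl (List.replicate (n+2) i))).toReal
          = lam⁻¹ * (ν (cyl (List.replicate (n+1) i))).toReal := by
        field_simp
        linarith
      rw [ha, pow_succ]
      nlinarith
  -- chain for C-cylinders
  have hCstep : ∀ k : ℕ, 1 ≤ k →
      lam * (ν (cyl (List.replicate (k+1) i ++ [j]))).toReal
        = (ν (cyl (List.replicate k i ++ [j]))).toReal := by
    intro k hk
    have hpt : ∀ x ∈ cyl (List.replicate k i ++ [j]), H (cons2 i x) = 0 := by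
      intro x hx
      exact hz i x (((mem_cyl_rep i j k x).1 hx).1 0 (by omega))
    have := nu_step β lam H ν hνeig i (List.replicate k i ++ [j]) 0 hpt
    rw [hlistC k] at this
    simpa using this
  have hCchain : ∀ k : ℕ, (ν (cyl (List.replicate (k+1) i ++ [j]))).toReal = (lam⁻¹)^k * c := by
    intro k
    induction k with
    | zero => simp [hc]
    | succ n ih =>
      have hstep := hCstep (n+1) (by omega)
      rw [ih] at hstep
      have : (ν (cyl (List.replicate (n+2) i ++ [j]))).toReal
          = lam⁻¹ * ((lam⁻¹)^n * c) := by
        field_simp at hstep ⊢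
        linarith
      rw [this, pow_succ]
      ring
  -- B-cylinders
  have hB : ∀ k : ℕ, (ν (cyl (j :: (List.replicate (k+1) i ++ [j])))).toReal
      = (lam^(k+1))⁻¹ * Real.exp (-β * Hi (k+1)) * c := by
    intro k
    have hpt : ∀ x ∈ cyl (List.replicate (k+1) i ++ [j]), H (cons2 j x) = Hi (k+1) := by
      intro x hx
      exact hvi (k+1) (by omega) _ ((mem_cyl_cons2 j j _ x).2 ⟨rfl, hx⟩)
    have hstep := nu_step β lam H ν hνeig j (List.replicate (k+1) i ++ [j]) (Hi (k+1)) hpt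
    rw [hCchain k] at hstep
    have hpow : (lam^(k+1))⁻¹ = lam⁻¹ * (lam⁻¹)^k := by
      rw [← inv_pow, pow_succ]; ring
    rw [hpow]
    field_simp at hstep ⊢
    linarith
  -- the atom
  set pt : Sig := cons2 j (fun _ => i) with hpt
  have hsub : ∀ k : ℕ, ({pt} : Set Sig) ⊆ cyl (j :: List.replicate (k+1) i) := by
    intro k y hy
    rw [Set.mem_singleton_iff] at hy
    subst hy
    rw [mem_cyl_cons]
    exact ⟨rfl, (mem_cyl_repOnly i (k+1) _).2 fun n hn => rfl⟩
  have hatomr : (ν ({pt} : Set Sig)).toReal = 0 := by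
    have hub : ∀ k : ℕ, (ν ({pt} : Set Sig)).toReal ≤ (lam⁻¹)^(k+1) := by
      intro k
      have h1 : (ν ({pt} : Set Sig)).toReal ≤ (ν (cyl (j :: List.replicate (k+1) i))).toReal :=
        ENNReal.toReal_mono (measure_ne_top ν _) (measure_mono (hsub k))
      have h2 := nu_step_le β lam H ν hβ hH0 hHc hνeig j (List.replicate (k+1) i)
      have h3 := hZbound k
      have hinv : (0:ℝ) < lam⁻¹ := inv_pos.mpr hlam0
      rw [pow_succ]
      have h4 : (ν (cyl (j :: List.replicate (k+1) i))).toReal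
          ≤ lam⁻¹ * (ν (cyl (List.replicate (k+1) i))).toReal := by
        have h5 := mul_le_mul_of_nonneg_left h2 hinv.le
        rw [← mul_assoc, inv_mul_cancel₀ (ne_of_gt hlam0), one_mul] at h5
        exact h5
      nlinarith [ENNReal.toReal_nonneg (a := ν ({pt} : Set Sig))]
    have hlim : Tendsto (fun k : ℕ => (lam⁻¹)^(k+1)) atTop (𝓝 0) :=
      (tendsto_pow_atTop_nhds_zero_of_lt_one (inv_nonneg.mpr hlam0.le)
        (inv_lt_one_of_one_lt₀ hlam)).comp (tendsto_add_atTop_nat 1)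
    have h0 : (ν ({pt} : Set Sig)).toReal ≤ 0 := ge_of_tendsto hlim (Eventually.of_forall hub)
    exact le_antisymm h0 ENNReal.toReal_nonneg
  have hatom : ν ({pt} : Set Sig) = 0 := by
    rcases (ENNReal.toReal_eq_zero_iff _).1 hatomr with h | h
    · exact h
    · exact absurd h (measure_ne_top ν _)
  -- decomposition of cyl [j, i]
  have hdecomp : cyl [j, i] = (⋃ k : ℕ, cyl (j :: (List.replicate (k+1) i ++ [j]))) ∪ {pt} := by
    ext x
    constructor
    · intro hx
      have hx0 : x 0 = j := hx 0 (by simp)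
      have hx1 : x 1 = i := hx 1 (by simp)
      by_cases hall : ∀ n : ℕ, 1 ≤ n → x n = i
      · right
        rw [Set.mem_singleton_iff]
        funext n
        cases n with
        | zero => exact hx0
        | succ m => exact hall (m+1) (by omega)
      · left
        push_neg at hall
        obtain ⟨n, hn1, hni⟩ := hall
        have hex : ∃ m : ℕ, x (m+1) ≠ i := ⟨n - 1, by
          have : n - 1 + 1 = n := by omega
          rw [this]; exact hni⟩
        set m := Nat.find hex with hm
        have hmne : x (m+1) ≠ i := Nat.find_spec hex
        have hmj : x (m+1) = j := by
          rcases fin2_ne i j hij (x (m+1)) with h | h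
          · exact absurd h hmne
          · exact h
        have hmlt : ∀ l : ℕ, l < m → x (l+1) = i := by
          intro l hl
          by_contra hne
          exact Nat.find_min hex hl hne
        have hm1 : 1 ≤ m := by
          by_contra hm0
          have : m = 0 := by omega
          rw [this] at hmne
          exact hmne hx1
        refine Set.mem_iUnion.2 ⟨m - 1, ?_⟩
        have hmm : m - 1 + 1 = m := by omega
        rw [mem_cyl_cons]
        refine ⟨hx0, ?_⟩
        rw [mem_cyl_rep]
        constructor
        · intro l hl
          rw [hmm] at hl
          exact hmlt l hl
        · rw [hmm]
          exact hmj
    · intro hx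
      rcases hx with hx | hx
      · obtain ⟨k, hk⟩ := Set.mem_iUnion.1 hx
        rw [mem_cyl_cons] at hk
        obtain ⟨h0, h1⟩ := hk
        rw [mem_cyl_rep] at h1
        intro n hn
        simp only [List.length_cons, List.length_nil] at hn
        interval_cases n
        · exact h0
        · exact h1.1 0 (by omega)
      · rw [Set.mem_singleton_iff] at hx
        subst hx
        intro n hn
        simp only [List.length_cons, List.length_nil] at hn
        interval_cases n
        · rfl
        · rfl
  -- disjointness
  have hdisj : Pairwise (Function.onFun Disjoint
      (fun k : ℕ => cyl (j :: (List.replicate (k+1) i ++ [j])))) := by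
    have key : ∀ k l : ℕ, k < l →
        Disjoint (cyl (j :: (List.replicate (k+1) i ++ [j])))
          (cyl (j :: (List.replicate (l+1) i ++ [j]))) := by
      intro k l hkl
      rw [Set.disjoint_left]
      intro x hxk hxl
      rw [mem_cyl_cons, mem_cyl_rep] at hxk hxl
      have h1 : x (k+2) = j := hxk.2.2
      have h2 : x (k+2) = i := hxl.2.1 (k+1) (by omega)
      rw [h1] at h2
      exact hij h2.symm
    intro k l hkl
    rcases lt_or_gt_of_ne hkl with h | h
    · exact key k l h
    · exact (key l k h).symm
  -- put it together
  have hmeas : ∀ k : ℕ, MeasurableSet (cyl (j :: (List.replicate (k+1) i ++ [j]))) :=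
    fun k => measurableSet_cyl _
  have hνji : ν (cyl [j, i]) = ∑' k : ℕ, ν (cyl (j :: (List.replicate (k+1) i ++ [j]))) := by
    rw [hdecomp]
    rw [le_antisymm ((measure_union_le _ _).trans (by simp [hatom]))
      (measure_mono Set.subset_union_left)]
    exact measure_iUnion hdisj hmeas
  have hterm : ∀ k : ℕ, ν (cyl (j :: (List.replicate (k+1) i ++ [j])))
      = ENNReal.ofReal ((lam^(k+1))⁻¹ * Real.exp (-β * Hi (k+1)) * c) := by
    intro k
    rw [← hB k]
    exact (ENNReal.ofReal_toReal (measure_ne_top ν _)).symm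
  have hsummable : Summable (fun k : ℕ => (lam^(k+1))⁻¹ * Real.exp (-β * Hi (k+1)) * c) :=
    (summable_w β lam Hi hβ hlam hHi).mul_right c
  have hnn : ∀ k : ℕ, 0 ≤ (lam^(k+1))⁻¹ * Real.exp (-β * Hi (k+1)) * c := by
    intro k
    have := w_pos β lam Hi hlam k
    positivity
  have hsum : ν (cyl [j, i]) = ENNReal.ofReal (Fser β Hi lam * c) := by
    rw [hνji]
    have h1 : ∑' k : ℕ, ν (cyl (j :: (List.replicate (k+1) i ++ [j])))
        = ∑' k : ℕ, ENNReal.ofReal ((lam^(k+1))⁻¹ * Real.exp (-β * Hi (k+1)) * c) := by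
      exact tsum_congr hterm
    rw [h1, ← ENNReal.ofReal_tsum_of_nonneg hnn hsummable]
    congr 1
    rw [tsum_mul_right]
    rfl
  have hFnn : 0 ≤ Fser β Hi lam :=
    tsum_nonneg fun k => (w_pos β lam Hi hlam k).le
  have hfinal : (ν (cyl [j, i])).toReal = Fser β Hi lam * c := by
    rw [hsum, ENNReal.toReal_ofReal (by positivity)]
  rw [hfinal, hc]
  have : (List.replicate 1 i ++ [j] : List (Fin 2)) = [i, j] := by simp
  rw [this]

end KeyMeas

/-- the characteristic equation `F_β^0(λ_β) F_β^1(λ_β) = 1` and the relations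
between the values of `Φ_β` and `ν_β` on the cylinders `[01]` and `[10]`. -/
theorem stmt_12 (H : Sig → ℝ) (H0 H1 : ℕ → ℝ) (hR : ReducedDW H H0 H1)
    (β : ℝ) (hβ : 0 < β) (Φ : Sig → ℝ) (lam : ℝ) (ν : Measure Sig)
    (hΦc : Continuous Φ) (hΦpos : ∀ x, 0 < Φ x) (hΦmax : IsGreatest (Set.range Φ) 1)
    (hlam : 0 < lam) (heig : transfer β H Φ = fun x => lam * Φ x)
    (hν : IsProbabilityMeasure ν)
    (hνeig : ∀ f : Sig → ℝ, Continuous f → ∫ x, transfer β H f x ∂ν = lam * ∫ x, f x ∂ν) :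
    Fser β H0 lam * Fser β H1 lam = 1 ∧
    Φ (cons2 0 opt) = Fser β H1 lam * Φ (cons2 1 zpt) ∧
    Φ (cons2 1 zpt) = Fser β H0 lam * Φ (cons2 0 opt) ∧
    (ν (cyl [0, 1])).toReal = Fser β H0 lam * (ν (cyl [1, 0])).toReal ∧
    (ν (cyl [1, 0])).toReal = Fser β H1 lam * (ν (cyl [0, 1])).toReal := by
  haveI := hν
  have hΦle : ∀ x, Φ x ≤ 1 := fun x => hΦmax.2 (Set.mem_range_self x)
  have hz : ∀ (a : Fin 2) (x : Sig), x 0 = a → H (cons2 a x) = 0 := by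
    intro a x hx
    have hmem : cons2 a x ∈ cyl [a, a] := by
      intro n hn
      simp only [List.length_cons, List.length_nil] at hn
      interval_cases n
      · rfl
      · simpa [cons2] using hx
    apply hR.zero
    rcases fin2_cases a with h | h <;> subst h
    · exact Set.mem_union_left _ hmem
    · exact Set.mem_union_right _ hmem
  have hH0nn : ∀ k, 1 ≤ k → 0 ≤ H0 k := fun k hk => (hR.pos0 k hk).le
  have hH1nn : ∀ k, 1 ≤ k → 0 ≤ H1 k := fun k hk => (hR.pos1 k hk).le
  have hlam1 : 1 < lam := lam_gt_one β lam H Φ hΦpos heig hz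
  have h10ne : (1 : Fin 2) ≠ 0 := by decide
  have h01ne : (0 : Fin 2) ≠ 1 := by decide
  have key10 := keyconst β lam H Φ H0 H1 hβ hlam1 hΦc hΦpos hΦle heig 1 0 h10ne hz
    hR.val0 hR.val1 hH0nn hH1nn
  have key01 := keyconst β lam H Φ H1 H0 hβ hlam1 hΦc hΦpos hΦle heig 0 1 h01ne hz
    hR.val1 hR.val0 hH1nn hH0nn
  have hpre0 : ∀ (a : Fin 2) (m : ℕ) (s : Sig), (pre a (m + 1) s) 0 = a := by
    intro a m s; rw [pre_apply]; simp
  refine ⟨key10.1, ?_, ?_, ?_, ?_⟩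
  · -- Φ (cons2 0 opt) = Fser β H1 lam * Φ (cons2 1 zpt)
    have htele := tele β lam H Φ H1 hβ hlam1 hΦpos hΦle heig 0 1 h01ne hz hR.val1 hH1nn opt rfl
    have h2 : HasSum (fun m : ℕ => (lam ^ (m + 1))⁻¹ * Real.exp (-β * H1 (m + 1))
        * Φ (cons2 1 zpt)) (Φ (cons2 0 opt)) := by
      refine htele.congr_fun fun m => ?_
      have := key10.2 (pre 0 (m + 1) opt) (hpre0 0 m opt)
      rw [this]
      rfl
    have h3 := h2.tsum_eq
    rw [tsum_mul_right] at h3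
    rw [← h3]
    rfl
  · -- Φ (cons2 1 zpt) = Fser β H0 lam * Φ (cons2 0 opt)
    have htele := tele β lam H Φ H0 hβ hlam1 hΦpos hΦle heig 1 0 h10ne hz hR.val0 hH0nn zpt rfl
    have h2 : HasSum (fun m : ℕ => (lam ^ (m + 1))⁻¹ * Real.exp (-β * H0 (m + 1))
        * Φ (cons2 0 opt)) (Φ (cons2 1 zpt)) := by
      refine htele.congr_fun fun m => ?_
      have := key01.2 (pre 1 (m + 1) zpt) (hpre0 1 m zpt)
      rw [this]
      rfl
    have h3 := h2.tsum_eq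
    rw [tsum_mul_right] at h3
    rw [← h3]
    rfl
  · -- ν [0,1] = F0 ν [1,0]
    have := keymeasure β lam H H0 ν hβ hlam1 hR.cont hR.nonneg hνeig 1 0 h10ne hz
      hR.val0 hH0nn
    simpa using this
  · -- ν [1,0] = F1 ν [0,1]
    have := keymeasure β lam H H1 ν hβ hlam1 hR.cont hR.nonneg hνeig 0 1 h01ne hz
      hR.val1 hH1nn
    simpa using this
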